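/- Duality of cb norms on the block-multilinear subspace: for a partition P of [n] into t parts and p ∈ V_P, the dual cb-norm with respect to V_P satisfies ‖p‖_{cb,*} = t! · ‖T_p‖_{cb,*}, where T_p is the unique symmetric t-tensor representing p and ‖T_p‖_{cb,*} is the dual of the tensor cb norm on the full tensor space. -/

import Mathlib

open MvPolynomial Finset
set_option maxHeartbeats 1000000
set_option synthInstance.maxHeartbeats 400000

noncomputable section

/-- `d × d` real matrices, viewed as operators on Euclidean space (with operator norm). -/
abbrev Mat (d : ℕ) := EuclideanSpace ℝ (Fin d) →L[ℝ] EuclideanSpace ℝ (Fin d)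

/-- Evaluation of a `t`-tensor as a degree-`t` form: `T(x) = ∑_i T_i x_{i₁}⋯x_{i_t}`. -/
def tEval {n t : ℕ} (T : (Fin t → Fin n) → ℝ) (x : Fin n → ℝ) : ℝ :=
  ∑ i : Fin t → Fin n, T i * ∏ s, x (i s)

/-- Permutation action on tensors: `(T∘σ)_i = T_{σ(i)}`. -/
def permT {n t : ℕ} (T : (Fin t → Fin n) → ℝ) (σ : Equiv.Perm (Fin t)) :
    (Fin t → Fin n) → ℝ :=
  fun i => T (i ∘ σ)

/-- The completely bounded norm of a `t`-tensor (single contraction-valued map). -/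
def cbNormT {n t : ℕ} (T : (Fin t → Fin n) → ℝ) : ℝ :=
  sSup {c : ℝ | ∃ (d : ℕ) (A : Fin n → Mat d),
    (∀ j, ‖A j‖ ≤ 1) ∧
    c = ‖∑ i : Fin t → Fin n, T i • (List.ofFn fun s => A (i s)).prod‖}

/-- The completely bounded norm of a degree-`t` form:
`‖p‖_cb = inf { ‖T‖_cb : T(x) = p(x) ∀ x }`. -/
def polyCb (n t : ℕ) (p : MvPolynomial (Fin n) ℝ) : ℝ :=
  sInf {c : ℝ | ∃ T : (Fin t → Fin n) → ℝ,
    (∀ x : Fin n → ℝ, tEval T x = eval x p) ∧ c = cbNormT T}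

/-- The coefficient-wise inner product of two polynomials. -/
def pInner {n : ℕ} (p q : MvPolynomial (Fin n) ℝ) : ℝ :=
  ∑ α ∈ p.support, p.coeff α * q.coeff α

/-- Membership in `V_P`, the span of the block-multilinear monomials
`x_{i₁}⋯x_{i_t}` with exactly one variable from each block of the partition
(given by `π : Fin n → Fin t`, whose fibers are the blocks). -/
def memV {n t : ℕ} (π : Fin n → Fin t) (p : MvPolynomial (Fin n) ℝ) : Prop :=
  ∀ α ∈ p.support, (∀ i, α i ≤ 1) ∧
    ∀ s : Fin t, ∑ i ∈ Finset.univ.filter (fun i => π i = s), α i = 1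


-- ==================== auxiliary development ====================


def monOf {n t : ℕ} (i : Fin t → Fin n) : Fin n →₀ ℕ := ∑ s, Finsupp.single (i s) 1

lemma monOf_apply {n t : ℕ} (i : Fin t → Fin n) (j : Fin n) :
    monOf i j = (univ.filter fun s => i s = j).card := by
  classical
  rw [monOf, Finsupp.finset_sum_apply, Finset.card_filter]
  refine Finset.sum_congr rfl fun s _ => ?_
  rw [Finsupp.single_apply]

lemma prodX_eq_aux {n t : ℕ} (i : Fin t → Fin n) (F : Finset (Fin t)) :
    (∏ s ∈ F, (X (i s) : MvPolynomial (Fin n) ℝ)) =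
      monomial (∑ s ∈ F, Finsupp.single (i s) 1) 1 := by
  classical
  induction F using Finset.induction with
  | empty => simp
  | @insert a F ha ih =>
      rw [Finset.prod_insert ha, Finset.sum_insert ha, ih, X, monomial_mul, one_mul]

lemma prodX_eq {n t : ℕ} (i : Fin t → Fin n) :
    (∏ s, (X (i s) : MvPolynomial (Fin n) ℝ)) = monomial (monOf i) 1 :=
  prodX_eq_aux i univ

def polyOfT {n t : ℕ} (T : (Fin t → Fin n) → ℝ) : MvPolynomial (Fin n) ℝ :=
  ∑ i : Fin t → Fin n, monomial (monOf i) (T i)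

lemma eval_polyOfT {n t : ℕ} (T : (Fin t → Fin n) → ℝ) (x : Fin n → ℝ) :
    eval x (polyOfT T) = ∑ i : Fin t → Fin n, T i * ∏ s, x (i s) := by
  classical
  rw [polyOfT, map_sum]
  refine Finset.sum_congr rfl fun i _ => ?_
  have : (monomial (monOf i)) (T i) = C (T i) * monomial (monOf i) 1 := by
    rw [C_mul_monomial, mul_one]
  rw [this, ← prodX_eq, map_mul, eval_C, map_prod]
  simp only [eval_X]

lemma coeff_polyOfT {n t : ℕ} (T : (Fin t → Fin n) → ℝ) (α : Fin n →₀ ℕ) :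
    coeff α (polyOfT T) = ∑ i ∈ univ.filter (fun i => monOf i = α), T i := by
  classical
  rw [polyOfT, Finset.sum_filter]
  rw [← lcoeff_apply, map_sum]
  refine Finset.sum_congr rfl fun i _ => ?_
  rw [lcoeff_apply, coeff_monomial]


def sgn (b : Bool) : ℝ := if b then 1 else -1

lemma sgn_sq (b : Bool) : sgn b * sgn b = 1 := by cases b <;> simp [sgn]

lemma abs_sgn (b : Bool) : |sgn b| = 1 := by cases b <;> simp [sgn]

lemma signSum {ι : Type*} [Fintype ι] [DecidableEq ι] (m : ι → ℕ) :
    ∑ ε : ι → Bool, ∏ j, sgn (ε j) ^ (m j) =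
      if (∀ j, Even (m j)) then (2 : ℝ) ^ (Fintype.card ι) else 0 := by
  classical
  rw [← Fintype.prod_sum (fun (j : ι) (b : Bool) => sgn b ^ (m j))]
  have h1 : ∀ j, (∑ b : Bool, sgn b ^ (m j)) = if Even (m j) then (2:ℝ) else 0 := by
    intro j
    rw [Fintype.sum_bool]
    by_cases h : Even (m j)
    · rw [if_pos h]; simp [sgn, h.neg_one_pow]; norm_num
    · rw [if_neg h]
      rw [Nat.not_even_iff_odd] at h
      simp [sgn, h.neg_one_pow]
  simp_rw [h1]
  by_cases h : ∀ j, Even (m j)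
  · simp only [if_pos h]
    rw [Finset.prod_congr rfl (fun j _ => if_pos (h j)), Finset.prod_const, Finset.card_univ]
  · simp only [if_neg h]
    push_neg at h
    obtain ⟨j, hj⟩ := h
    exact Finset.prod_eq_zero (Finset.mem_univ j) (if_neg hj)

lemma count_ofFn {α : Type*} [DecidableEq α] {t : ℕ} (i : Fin t → α) (j : α) :
    (List.ofFn i).count j = (univ.filter fun s => i s = j).card := by
  induction t with
  | zero => simp
  | succ t ih =>
    rw [List.ofFn_succ, List.count_cons, ih (fun s => i s.succ),
      Finset.card_filter, Finset.card_filter, Fin.sum_univ_succ]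
    simp [add_comm]

-- class lemma
lemma exists_comp_perm {n t : ℕ} {i i' : Fin t → Fin n}
    (h : ∀ j, (univ.filter fun s => i s = j).card = (univ.filter fun s => i' s = j).card) :
    ∃ σ : Equiv.Perm (Fin t), i' = i ∘ σ := by
  classical
  have hperm : (List.ofFn i).Perm (List.ofFn i') := by
    rw [List.perm_iff_count]
    intro j
    rw [count_ofFn, count_ofFn, h j]
  have hs1 : List.SortedLE (List.ofFn (i ∘ Tuple.sort i)) := by
    rw [List.sortedLE_ofFn_iff]; exact Tuple.monotone_sort i
  have hs2 : List.SortedLE (List.ofFn (i' ∘ Tuple.sort i')) := by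
    rw [List.sortedLE_ofFn_iff]; exact Tuple.monotone_sort i'
  have hp : (List.ofFn (i ∘ Tuple.sort i)).Perm (List.ofFn (i' ∘ Tuple.sort i')) :=
    ((Tuple.sort i).ofFn_comp_perm i).trans (hperm.trans ((Tuple.sort i').ofFn_comp_perm i').symm)
  have heq : i ∘ Tuple.sort i = i' ∘ Tuple.sort i' :=
    List.ofFn_injective (List.Perm.eq_of_sortedLE hs1 hs2 hp)
  refine ⟨(Tuple.sort i').symm.trans (Tuple.sort i), ?_⟩  -- check order
  funext s
  have := congrFun heq ((Tuple.sort i').symm s)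
  simpa using this.symm

def cbSet {n t : ℕ} (T : (Fin t → Fin n) → ℝ) : Set ℝ :=
  {c : ℝ | ∃ (d : ℕ) (A : Fin n → Mat d),
    (∀ j, ‖A j‖ ≤ 1) ∧
    c = ‖∑ i : Fin t → Fin n, T i • (List.ofFn fun s => A (i s)).prod‖}

lemma cbNormT_eq {n t : ℕ} (T : (Fin t → Fin n) → ℝ) : cbNormT T = sSup (cbSet T) := rfl

lemma norm_list_prod_le {d : ℕ} (l : List (Mat d)) (h : ∀ x ∈ l, ‖x‖ ≤ 1) :
    ‖l.prod‖ ≤ 1 := by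
  induction l with
  | nil =>
    rw [List.prod_nil, ContinuousLinearMap.one_def]
    exact ContinuousLinearMap.norm_id_le
  | cons a l ih =>
    rw [List.prod_cons]
    calc ‖a * l.prod‖ ≤ ‖a‖ * ‖l.prod‖ := norm_mul_le _ _
    _ ≤ 1 * 1 := by
        exact mul_le_mul (h a (List.mem_cons_self)) (ih fun x hx => h x (List.mem_cons_of_mem _ hx)) (norm_nonneg _) zero_le_one
    _ = 1 := one_mul 1

lemma cb_bdd {n t : ℕ} (T : (Fin t → Fin n) → ℝ) :
    ∀ c ∈ cbSet T, c ≤ ∑ i : Fin t → Fin n, |T i| := by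
  rintro c ⟨d, A, hA, rfl⟩
  calc ‖∑ i : Fin t → Fin n, T i • (List.ofFn fun s => A (i s)).prod‖
      ≤ ∑ i : Fin t → Fin n, ‖T i • (List.ofFn fun s => A (i s)).prod‖ := norm_sum_le _ _
    _ ≤ ∑ i : Fin t → Fin n, |T i| := by
        refine Finset.sum_le_sum fun i _ => ?_
        rw [norm_smul (T i) ((List.ofFn fun s => A (i s)).prod), Real.norm_eq_abs]
        have h1 : ‖(List.ofFn fun s => A (i s)).prod‖ ≤ 1 := by
          refine norm_list_prod_le _ fun x hx => ?_
          obtain ⟨s, rfl⟩ := List.mem_ofFn.1 hx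
          exact hA _
        calc |T i| * ‖(List.ofFn fun s => A (i s)).prod‖ ≤ |T i| * 1 :=
              mul_le_mul_of_nonneg_left h1 (abs_nonneg _)
          _ = |T i| := mul_one _

lemma cb_bddAbove {n t : ℕ} (T : (Fin t → Fin n) → ℝ) : BddAbove (cbSet T) :=
  ⟨_, cb_bdd T⟩

lemma zero_mem_cbSet {n t : ℕ} (T : (Fin t → Fin n) → ℝ) : (0:ℝ) ∈ cbSet T := by
  refine ⟨0, fun _ => 0, fun j => by simp, ?_⟩
  symm
  rw [norm_eq_zero]
  exact Subsingleton.elim _ _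

lemma cb_nonempty {n t : ℕ} (T : (Fin t → Fin n) → ℝ) : (cbSet T).Nonempty :=
  ⟨0, zero_mem_cbSet T⟩

lemma le_cbNormT {n t : ℕ} {T : (Fin t → Fin n) → ℝ} {c : ℝ} (h : c ∈ cbSet T) :
    c ≤ cbNormT T := le_csSup (cb_bddAbove T) h

lemma cbNormT_nonneg {n t : ℕ} (T : (Fin t → Fin n) → ℝ) : 0 ≤ cbNormT T :=
  le_cbNormT (zero_mem_cbSet T)

lemma cbNormT_le_sum {n t : ℕ} (T : (Fin t → Fin n) → ℝ) :
    cbNormT T ≤ ∑ i : Fin t → Fin n, |T i| :=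
  csSup_le (cb_nonempty T) (cb_bdd T)

lemma cb_scale_le {n t : ℕ} (T : (Fin t → Fin n) → ℝ) (c : ℝ) (hc : 0 ≤ c) :
    cbNormT (fun i => c * T i) ≤ c * cbNormT T := by
  refine csSup_le (cb_nonempty _) ?_
  rintro x ⟨d, A, hA, rfl⟩
  have : (∑ i : Fin t → Fin n, (c * T i) • (List.ofFn fun s => A (i s)).prod)
      = c • ∑ i : Fin t → Fin n, T i • (List.ofFn fun s => A (i s)).prod := by
    rw [Finset.smul_sum]
    exact Finset.sum_congr rfl fun i _ => by rw [smul_smul]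
  rw [this, norm_smul c (∑ i : Fin t → Fin n, T i • (List.ofFn fun s => A (i s)).prod),
    Real.norm_eq_abs, abs_of_nonneg hc]
  exact mul_le_mul_of_nonneg_left (le_cbNormT ⟨d, A, hA, rfl⟩) hc

lemma norm_one_mat : ‖(1 : Mat 1)‖ = 1 := by
  rw [ContinuousLinearMap.one_def, ContinuousLinearMap.norm_id]

lemma mat_smul_mul {d : ℕ} (c : ℝ) (X Y : Mat d) : (c • X) * Y = c • (X * Y) := by
  ext v; simp [ContinuousLinearMap.mul_apply]

lemma mat_mul_smul {d : ℕ} (c : ℝ) (X Y : Mat d) : X * (c • Y) = c • (X * Y) := by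
  ext v; simp [ContinuousLinearMap.mul_apply]

lemma smul_ofFn_prod {d : ℕ} : ∀ {t : ℕ} (c : Fin t → ℝ) (B : Fin t → Mat d),
    (List.ofFn fun s => c s • B s).prod = (∏ s, c s) • (List.ofFn B).prod := by
  intro t
  induction t with
  | zero => intro c B; simp
  | succ t ih =>
    intro c B
    rw [List.ofFn_succ, List.ofFn_succ, List.prod_cons, List.prod_cons,
      ih (fun s => c s.succ) (fun s => B s.succ), Fin.prod_univ_succ,
      mat_smul_mul, mat_mul_smul, smul_smul]

lemma ofFn_one_prod {d : ℕ} (t : ℕ) : (List.ofFn fun _ : Fin t => (1 : Mat d)).prod = 1 := by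
  rw [List.ofFn_const, List.prod_replicate, one_pow]

lemma tEval_abs_le {n t : ℕ} (T : (Fin t → Fin n) → ℝ) (x : Fin n → ℝ)
    (hx : ∀ j, |x j| ≤ 1) :
    |∑ i : Fin t → Fin n, T i * ∏ s, x (i s)| ≤ cbNormT T := by
  refine le_cbNormT ⟨1, fun j => x j • (1 : Mat 1), fun j => ?_, ?_⟩
  · rw [norm_smul (x j) (1 : Mat 1), Real.norm_eq_abs, norm_one_mat, mul_one]
    exact hx j
  · show _ = ‖∑ i : Fin t → Fin n, T i • (List.ofFn fun s => x (i s) • (1 : Mat 1)).prod‖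
    have h2 : ∀ i : Fin t → Fin n, T i • (List.ofFn fun s => x (i s) • (1 : Mat 1)).prod
        = (T i * ∏ s, x (i s)) • (1 : Mat 1) := by
      intro i
      rw [smul_ofFn_prod (fun s => x (i s)) (fun _ => (1 : Mat 1)), ofFn_one_prod,
        smul_smul]
    have h : (∑ i : Fin t → Fin n, T i • (List.ofFn fun s => x (i s) • (1 : Mat 1)).prod)
        = (∑ i : Fin t → Fin n, T i * ∏ s, x (i s)) • (1 : Mat 1) := by
      rw [Finset.sum_congr rfl fun i _ => h2 i, ← Finset.sum_smul]
    rw [h, norm_smul (∑ i : Fin t → Fin n, T i * ∏ s, x (i s)) (1 : Mat 1),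
      Real.norm_eq_abs, norm_one_mat, mul_one]

/-- an index tuple is "good" if it hits each block exactly once -/
def goodIdx {n t : ℕ} (π : Fin n → Fin t) (i : Fin t → Fin n) : Prop :=
  ∀ s : Fin t, (univ.filter fun s' => π (i s') = s).card = 1

open Classical in
/-- projection of a tensor onto good (block-multilinear) indices -/
def projT {n t : ℕ} (π : Fin n → Fin t) (T : (Fin t → Fin n) → ℝ) :
    (Fin t → Fin n) → ℝ :=
  fun i => if goodIdx π i then T i else 0

lemma sum_fiber_card {n t : ℕ} (π : Fin n → Fin t) (i : Fin t → Fin n) :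
    ∑ s : Fin t, (univ.filter fun s' => π (i s') = s).card = t := by
  classical
  rw [← Finset.card_eq_sum_card_fiberwise (f := fun s' => π (i s'))
    (fun x _ => mem_univ (π (i x))), card_univ, Fintype.card_fin]

lemma odd_iff_goodIdx {n t : ℕ} (π : Fin n → Fin t) (i : Fin t → Fin n) :
    (∀ s : Fin t, Odd ((univ.filter fun s' => π (i s') = s).card)) ↔ goodIdx π i := by
  constructor
  · intro h
    intro s
    have hle : ∀ s ∈ (univ : Finset (Fin t)),
        1 ≤ (univ.filter fun s' => π (i s') = s).card := fun s _ => (h s).pos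
    have hsum : ∑ s : Fin t, (1:ℕ) = ∑ s : Fin t, (univ.filter fun s' => π (i s') = s).card := by
      rw [sum_fiber_card, Finset.sum_const, card_univ, Fintype.card_fin, smul_eq_mul, mul_one]
    exact ((Finset.sum_eq_sum_iff_of_le hle).1 hsum s (mem_univ s)).symm
  · intro h s
    rw [h s]
    exact odd_one

lemma cbNormT_proj_le {n t : ℕ} (π : Fin n → Fin t) (T : (Fin t → Fin n) → ℝ) :
    cbNormT (projT π T) ≤ cbNormT T := by
  classical
  refine csSup_le (cb_nonempty _) ?_
  rintro c ⟨d, A, hA, rfl⟩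
  set P : (Fin t → Fin n) → Mat d := fun i => (List.ofFn fun s => A (i s)).prod with hP
  set m : (Fin t → Fin n) → Fin t → ℕ :=
    fun i s' => (univ.filter fun s => π (i s) = s').card with hm
  set Aε : (Fin t → Bool) → Fin n → Mat d := fun ε j => sgn (ε (π j)) • A j with hAε
  have hAεnorm : ∀ ε j, ‖Aε ε j‖ ≤ 1 := by
    intro ε j
    rw [hAε]
    show ‖sgn (ε (π j)) • A j‖ ≤ 1
    rw [norm_smul (sgn (ε (π j))) (A j), Real.norm_eq_abs, abs_sgn, one_mul]
    exact hA j
  have hPε : ∀ ε i, (List.ofFn fun s => Aε ε (i s)).prod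
      = (∏ s, sgn (ε (π (i s)))) • P i := by
    intro ε i
    exact smul_ofFn_prod (fun s => sgn (ε (π (i s)))) (fun s => A (i s))
  -- group the sign product by blocks
  have hgroup : ∀ (ε : Fin t → Bool) (i : Fin t → Fin n),
      (∏ s, sgn (ε s)) * (∏ s, sgn (ε (π (i s)))) = ∏ s', sgn (ε s') ^ (m i s' + 1) := by
    intro ε i
    have h1 : (∏ s, sgn (ε (π (i s)))) = ∏ s', sgn (ε s') ^ (m i s') := by
      rw [← Finset.prod_fiberwise_of_maps_to (g := fun s => π (i s))
        (fun x _ => mem_univ (π (i x))) (fun s => sgn (ε (π (i s))))]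
      refine Finset.prod_congr rfl fun s' _ => ?_
      rw [hm]
      rw [← Finset.prod_const]
      refine Finset.prod_congr rfl fun s hs => ?_
      rw [(Finset.mem_filter.1 hs).2]
    rw [h1, ← Finset.prod_mul_distrib]
    refine Finset.prod_congr rfl fun s' _ => ?_
    rw [mul_comm, ← pow_succ]
  -- the averaged coefficient
  have hcoeff : ∀ i : Fin t → Fin n,
      ∑ ε : Fin t → Bool, (∏ s, sgn (ε s)) * (∏ s, sgn (ε (π (i s))))
        = if goodIdx π i then (2:ℝ)^t else 0 := by
    intro i
    have : ∑ ε : Fin t → Bool, (∏ s, sgn (ε s)) * (∏ s, sgn (ε (π (i s))))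
        = ∑ ε : Fin t → Bool, ∏ s', sgn (ε s') ^ (m i s' + 1) :=
      Finset.sum_congr rfl fun ε _ => hgroup ε i
    rw [this, signSum (fun s' => m i s' + 1), Fintype.card_fin]
    have heven : (∀ s', Even (m i s' + 1)) ↔ goodIdx π i := by
      rw [← odd_iff_goodIdx π i]
      constructor
      · intro h s'
        have := h s'
        rwa [Nat.even_add_one, Nat.not_even_iff_odd] at this
      · intro h s'
        rw [Nat.even_add_one, Nat.not_even_iff_odd]
        exact h s'
    by_cases hgood : goodIdx π i
    · rw [if_pos (heven.2 hgood), if_pos hgood]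
    · rw [if_neg (fun hc => hgood (heven.1 hc)), if_neg hgood]
  -- main identity
  have key : (∑ i : Fin t → Fin n, projT π T i • P i)
      = ((2:ℝ)^t)⁻¹ • ∑ ε : Fin t → Bool, (∏ s, sgn (ε s)) •
          ∑ i : Fin t → Fin n, T i • (List.ofFn fun s => Aε ε (i s)).prod := by
    have h1 : ∀ ε : Fin t → Bool,
        (∏ s, sgn (ε s)) • ∑ i : Fin t → Fin n, T i • (List.ofFn fun s => Aε ε (i s)).prod
          = ∑ i : Fin t → Fin n,
              ((∏ s, sgn (ε s)) * (∏ s, sgn (ε (π (i s)))) * T i) • P i := by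
      intro ε
      rw [Finset.smul_sum]
      refine Finset.sum_congr rfl fun i _ => ?_
      rw [hPε ε i, smul_smul, smul_smul]
      congr 1
      ring
    rw [Finset.sum_congr rfl fun ε _ => h1 ε, Finset.sum_comm, Finset.smul_sum]
    refine Finset.sum_congr rfl fun i _ => ?_
    rw [← Finset.sum_smul, smul_smul]
    congr 1
    rw [← Finset.sum_mul, hcoeff i]
    by_cases hgood : goodIdx π i
    · rw [if_pos hgood, projT, if_pos hgood]
      field_simp
    · rw [if_neg hgood, projT, if_neg hgood]
      simp
  -- conclude by norm estimates
  show ‖∑ i : Fin t → Fin n, projT π T i • P i‖ ≤ cbNormT T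
  rw [key, norm_smul (((2:ℝ)^t)⁻¹) (∑ ε : Fin t → Bool, (∏ s, sgn (ε s)) •
      ∑ i : Fin t → Fin n, T i • (List.ofFn fun s => Aε ε (i s)).prod), Real.norm_eq_abs,
    abs_of_nonneg (by positivity : (0:ℝ) ≤ ((2:ℝ)^t)⁻¹)]
  have hbound : ‖∑ ε : Fin t → Bool, (∏ s, sgn (ε s)) •
      ∑ i : Fin t → Fin n, T i • (List.ofFn fun s => Aε ε (i s)).prod‖
      ≤ (2:ℝ)^t * cbNormT T := by
    calc ‖∑ ε : Fin t → Bool, (∏ s, sgn (ε s)) •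
          ∑ i : Fin t → Fin n, T i • (List.ofFn fun s => Aε ε (i s)).prod‖
        ≤ ∑ ε : Fin t → Bool, ‖(∏ s, sgn (ε s)) •
            ∑ i : Fin t → Fin n, T i • (List.ofFn fun s => Aε ε (i s)).prod‖ :=
          norm_sum_le _ _
      _ ≤ ∑ ε : Fin t → Bool, cbNormT T := by
          refine Finset.sum_le_sum fun ε _ => ?_
          rw [norm_smul (∏ s, sgn (ε s)) (∑ i : Fin t → Fin n, T i •
            (List.ofFn fun s => Aε ε (i s)).prod), Real.norm_eq_abs]
          have habs : |∏ s, sgn (ε s)| = 1 := by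
            rw [Finset.abs_prod]
            rw [Finset.prod_congr rfl fun s _ => abs_sgn (ε s), Finset.prod_const, one_pow]
          rw [habs, one_mul]
          exact le_cbNormT ⟨d, Aε ε, hAεnorm ε, rfl⟩
      _ = (2:ℝ)^t * cbNormT T := by
          rw [Finset.sum_const, card_univ, Fintype.card_fun, Fintype.card_bool,
            Fintype.card_fin, nsmul_eq_mul]
          push_cast
          ring
  calc ((2:ℝ)^t)⁻¹ * ‖∑ ε : Fin t → Bool, (∏ s, sgn (ε s)) •
        ∑ i : Fin t → Fin n, T i • (List.ofFn fun s => Aε ε (i s)).prod‖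
      ≤ ((2:ℝ)^t)⁻¹ * ((2:ℝ)^t * cbNormT T) :=
        mul_le_mul_of_nonneg_left hbound (by positivity)
    _ = cbNormT T := by field_simp

lemma goodIdx_inj {n t : ℕ} {π : Fin n → Fin t} {i : Fin t → Fin n}
    (h : goodIdx π i) : Function.Injective i := by
  intro s1 s2 hi
  have h1 := h (π (i s1))
  obtain ⟨a, ha⟩ := Finset.card_eq_one.1 h1
  have m1 : s1 ∈ univ.filter fun s' => π (i s') = π (i s1) := by
    simp
  have m2 : s2 ∈ univ.filter fun s' => π (i s') = π (i s1) := by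
    simp [hi]
  rw [ha, Finset.mem_singleton] at m1 m2
  rw [m1, m2]

lemma monOf_le_one_of_inj {n t : ℕ} {i : Fin t → Fin n}
    (h : Function.Injective i) (j : Fin n) : monOf i j ≤ 1 := by
  rw [monOf_apply]
  refine Finset.card_le_one.2 fun a ha b hb => ?_
  rw [Finset.mem_filter] at ha hb
  exact h (ha.2.trans hb.2.symm)

lemma block_sum_monOf {n t : ℕ} (π : Fin n → Fin t) (i : Fin t → Fin n) (s : Fin t) :
    ∑ j ∈ univ.filter (fun j => π j = s), monOf i j
      = (univ.filter fun s' => π (i s') = s).card := by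
  classical
  rw [Finset.card_eq_sum_card_fiberwise (f := i) (t := univ.filter (fun j => π j = s))
    (fun s' hs' => by
      rw [Finset.mem_coe, Finset.mem_filter] at hs' ⊢
      exact ⟨mem_univ _, hs'.2⟩)]
  refine Finset.sum_congr rfl fun j hj => ?_
  rw [Finset.mem_filter] at hj
  rw [monOf_apply]
  congr 1
  ext s'
  simp only [Finset.mem_filter, Finset.mem_univ, true_and]
  constructor
  · intro hs'
    exact ⟨by rw [hs']; exact hj.2, hs'⟩
  · intro hs'
    exact hs'.2

lemma goodIdx_of_monOf {n t : ℕ} {π : Fin n → Fin t} {i : Fin t → Fin n}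
    {α : Fin n →₀ ℕ} (hα : ∀ s : Fin t, ∑ j ∈ univ.filter (fun j => π j = s), α j = 1)
    (hm : monOf i = α) : goodIdx π i := by
  intro s
  rw [← block_sum_monOf π i s, hm]
  exact hα s

lemma exists_comp_perm_of_monOf {n t : ℕ} {i i' : Fin t → Fin n}
    (h : monOf i = monOf i') : ∃ σ : Equiv.Perm (Fin t), i' = i ∘ σ := by
  refine exists_comp_perm fun j => ?_
  rw [← monOf_apply, ← monOf_apply, h]

lemma monOf_comp_perm {n t : ℕ} (i : Fin t → Fin n) (σ : Equiv.Perm (Fin t)) :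
    monOf (i ∘ σ) = monOf i := by
  ext j
  rw [monOf_apply, monOf_apply]
  refine Finset.card_equiv σ fun s => ?_
  simp

lemma card_class_of_inj {n t : ℕ} {i : Fin t → Fin n} (h : Function.Injective i) :
    (univ.filter fun i' : Fin t → Fin n => monOf i' = monOf i).card = t.factorial := by
  classical
  have : (univ : Finset (Equiv.Perm (Fin t))).card
      = (univ.filter fun i' : Fin t → Fin n => monOf i' = monOf i).card := by
    refine Finset.card_bij (fun σ _ => i ∘ σ) ?_ ?_ ?_
    · intro σ _
      rw [Finset.mem_filter]
      exact ⟨mem_univ _, monOf_comp_perm i σ⟩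
    · intro σ1 _ σ2 _ heq
      have h3 : i ∘ σ1 = i ∘ σ2 := heq
      ext s
      have h2 : σ1 s = σ2 s := h (congrFun h3 s)
      rw [h2]
    · intro i' hi'
      rw [Finset.mem_filter] at hi'
      obtain ⟨σ, hσ⟩ := exists_comp_perm_of_monOf hi'.2.symm
      exact ⟨σ, mem_univ _, hσ.symm⟩
  rw [← this, Finset.card_univ, Fintype.card_perm, Fintype.card_fin]

lemma repSet_bddBelow (n t : ℕ) (q : MvPolynomial (Fin n) ℝ) :
    BddBelow {c : ℝ | ∃ T : (Fin t → Fin n) → ℝ,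
      (∀ x : Fin n → ℝ, tEval T x = eval x q) ∧ c = cbNormT T} := by
  refine ⟨0, ?_⟩
  rintro c ⟨T, _, rfl⟩
  exact cbNormT_nonneg T

lemma polyCb_le_of_rep {n t : ℕ} {q : MvPolynomial (Fin n) ℝ} {T : (Fin t → Fin n) → ℝ}
    (h : ∀ x : Fin n → ℝ, tEval T x = eval x q) : polyCb n t q ≤ cbNormT T :=
  csInf_le (repSet_bddBelow n t q) ⟨T, h, rfl⟩

lemma tEval_polyOfT {n t : ℕ} (T : (Fin t → Fin n) → ℝ) (x : Fin n → ℝ) :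
    tEval T x = eval x (polyOfT T) := by
  rw [eval_polyOfT]
  rfl

lemma polyOfT_eq_of_rep {n t : ℕ} {q : MvPolynomial (Fin n) ℝ} {T : (Fin t → Fin n) → ℝ}
    (h : ∀ x : Fin n → ℝ, tEval T x = eval x q) : polyOfT T = q := by
  refine MvPolynomial.funext fun x => ?_
  rw [← tEval_polyOfT, h x]

lemma Tp_perm_const {n t : ℕ} {Tp : (Fin t → Fin n) → ℝ}
    (hsym : ∀ σ : Equiv.Perm (Fin t), permT Tp σ = Tp)
    (i : Fin t → Fin n) (σ : Equiv.Perm (Fin t)) : Tp (i ∘ σ) = Tp i :=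
  congrFun (hsym σ) i

lemma main_identity {n t : ℕ} (π : Fin n → Fin t) (p : MvPolynomial (Fin n) ℝ)
    (hp : memV π p) (Tp : (Fin t → Fin n) → ℝ)
    (hsym : ∀ σ : Equiv.Perm (Fin t), permT Tp σ = Tp)
    (hrep : ∀ x : Fin n → ℝ, tEval Tp x = eval x p)
    (q : MvPolynomial (Fin n) ℝ) (T : (Fin t → Fin n) → ℝ)
    (hT : ∀ x : Fin n → ℝ, tEval T x = eval x q) :
    pInner p q = (t.factorial : ℝ) * ∑ i : Fin t → Fin n, Tp i * T i := by
  classical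
  have hpeq : polyOfT Tp = p := polyOfT_eq_of_rep hrep
  have hqeq : polyOfT T = q := polyOfT_eq_of_rep hT
  have hcoeffp : ∀ i : Fin t → Fin n, coeff (monOf i) p
      = ((univ.filter fun i' : Fin t → Fin n => monOf i' = monOf i).card : ℝ) * Tp i := by
    intro i
    rw [← hpeq, coeff_polyOfT]
    rw [Finset.sum_congr rfl (fun i' hi' => ?_), Finset.sum_const, nsmul_eq_mul]
    obtain ⟨σ, hσ⟩ := exists_comp_perm_of_monOf (Finset.mem_filter.1 hi').2.symm
    rw [hσ]
    exact Tp_perm_const hsym i σ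
  have hsupp_good : ∀ i : Fin t → Fin n, monOf i ∈ p.support → goodIdx π i := by
    intro i hi
    exact goodIdx_of_monOf (hp (monOf i) hi).2 rfl
  have hbad_coeff : ∀ i : Fin t → Fin n, ¬ goodIdx π i → coeff (monOf i) p = 0 := by
    intro i hbad
    by_contra hc
    exact hbad (hsupp_good i (mem_support_iff.2 hc))
  have hTp_bad : ∀ i : Fin t → Fin n, ¬ goodIdx π i → Tp i = 0 := by
    intro i hbad
    have h0 := (hcoeffp i).symm.trans (hbad_coeff i hbad)
    have hcard : ((univ.filter fun i' : Fin t → Fin n => monOf i' = monOf i).card : ℝ) ≠ 0 := by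
      have : i ∈ univ.filter fun i' : Fin t → Fin n => monOf i' = monOf i := by simp
      have hpos := Finset.card_pos.2 ⟨i, this⟩
      positivity
    exact (mul_eq_zero.1 h0).resolve_left hcard
  have hgood_coeff : ∀ i : Fin t → Fin n, goodIdx π i →
      coeff (monOf i) p = (t.factorial : ℝ) * Tp i := by
    intro i hg
    rw [hcoeffp i, card_class_of_inj (goodIdx_inj hg)]
  have hterm : ∀ i : Fin t → Fin n,
      coeff (monOf i) p * T i = (t.factorial : ℝ) * (Tp i * T i) := by
    intro i
    by_cases hg : goodIdx π i
    · rw [hgood_coeff i hg]; ring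
    · rw [hbad_coeff i hg, hTp_bad i hg]; ring
  have hM : (t.factorial : ℝ) * ∑ i : Fin t → Fin n, Tp i * T i
      = ∑ i : Fin t → Fin n, coeff (monOf i) p * T i := by
    rw [Finset.mul_sum]
    exact Finset.sum_congr rfl fun i _ => (hterm i).symm
  rw [hM]
  -- now compute pInner p q as the same sum
  have hstep1 : ∑ i : Fin t → Fin n, coeff (monOf i) p * T i
      = ∑ i ∈ univ.filter (fun i : Fin t → Fin n => monOf i ∈ p.support),
          coeff (monOf i) p * T i := by
    refine (Finset.sum_filter_of_ne fun i _ hne => ?_).symm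
    exact mem_support_iff.2 (left_ne_zero_of_mul hne)
  have hstep2 : ∑ i ∈ univ.filter (fun i : Fin t → Fin n => monOf i ∈ p.support),
      coeff (monOf i) p * T i
      = ∑ α ∈ p.support, ∑ i ∈ univ.filter (fun i : Fin t → Fin n => monOf i = α),
          coeff (monOf i) p * T i := by
    rw [← Finset.sum_fiberwise_of_maps_to (g := monOf)
      (fun i hi => (Finset.mem_filter.1 hi).2)
      (fun i => coeff (monOf i) p * T i)]
    refine Finset.sum_congr rfl fun α hα => ?_
    congr 1
    rw [Finset.filter_filter]
    refine Finset.filter_congr fun i _ => ?_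
    constructor
    · intro h'
      exact h'.2
    · intro h'
      exact ⟨h' ▸ hα, h'⟩
  have hstep3 : ∀ α ∈ p.support,
      ∑ i ∈ univ.filter (fun i : Fin t → Fin n => monOf i = α),
        coeff (monOf i) p * T i = coeff α p * coeff α q := by
    intro α _
    have : ∑ i ∈ univ.filter (fun i : Fin t → Fin n => monOf i = α),
        coeff (monOf i) p * T i
        = ∑ i ∈ univ.filter (fun i : Fin t → Fin n => monOf i = α), coeff α p * T i := by
      refine Finset.sum_congr rfl fun i hi => ?_
      rw [(Finset.mem_filter.1 hi).2]
    rw [this, ← Finset.mul_sum, ← hqeq, coeff_polyOfT]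
  rw [hstep1, hstep2, Finset.sum_congr rfl hstep3]
  rfl

lemma block_structure {n t : ℕ} {π : Fin n → Fin t} {α : Fin n →₀ ℕ}
    (h1 : ∀ s : Fin t, ∑ j ∈ univ.filter (fun j => π j = s), α j = 1) (s : Fin t) :
    ∃ j : Fin n, π j = s ∧ α j = 1 ∧ ∀ j' : Fin n, π j' = s → α j' ≠ 0 → j' = j := by
  classical
  have hsum := h1 s
  have hex : ∃ j ∈ univ.filter (fun j => π j = s), α j ≠ 0 := by
    by_contra hno
    push_neg at hno
    rw [Finset.sum_eq_zero hno] at hsum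
    exact one_ne_zero hsum.symm
  obtain ⟨j, hj, hne⟩ := hex
  have hπj : π j = s := (Finset.mem_filter.1 hj).2
  have hle : α j ≤ 1 := by
    rw [← hsum]
    exact Finset.single_le_sum (fun _ _ => Nat.zero_le _) hj
  have hαj : α j = 1 := le_antisymm hle (Nat.one_le_iff_ne_zero.2 hne)
  refine ⟨j, hπj, hαj, fun j' hπj' hne' => ?_⟩
  by_contra hjj
  have hsub : {j, j'} ⊆ univ.filter (fun j => π j = s) := by
    intro x hx
    rw [Finset.mem_insert, Finset.mem_singleton] at hx
    rcases hx with rfl | rfl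
    · exact hj
    · exact Finset.mem_filter.2 ⟨mem_univ _, hπj'⟩
  have h2 : 2 ≤ ∑ j'' ∈ univ.filter (fun j => π j = s), α j'' := by
    calc 2 ≤ α j + α j' := by
          have := Nat.one_le_iff_ne_zero.2 hne'
          omega
      _ = ∑ j'' ∈ ({j, j'} : Finset (Fin n)), α j'' := by
          rw [Finset.sum_pair (fun h => hjj h.symm)]
      _ ≤ ∑ j'' ∈ univ.filter (fun j => π j = s), α j'' :=
          Finset.sum_le_sum_of_subset hsub
  omega

lemma exists_rep_of_memV {n t : ℕ} {π : Fin n → Fin t} {q : MvPolynomial (Fin n) ℝ}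
    (hq : memV π q) : ∃ T : (Fin t → Fin n) → ℝ, ∀ x : Fin n → ℝ, tEval T x = eval x q := by
  classical
  set T : (Fin t → Fin n) → ℝ :=
    fun i => if (∀ s, π (i s) = s) then coeff (monOf i) q else 0 with hTdef
  refine ⟨T, fun x => ?_⟩
  suffices h : polyOfT T = q by rw [tEval_polyOfT, h]
  ext α
  rw [coeff_polyOfT]
  by_cases hα : α ∈ q.support
  · obtain ⟨h1, h2⟩ := hq α hα
    -- canonical representative
    set c : Fin t → Fin n := fun s => Classical.choose (block_structure h2 s) with hc
    have hcspec : ∀ s : Fin t, π (c s) = s ∧ α (c s) = 1 ∧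
        ∀ j' : Fin n, π j' = s → α j' ≠ 0 → j' = c s :=
      fun s => Classical.choose_spec (block_structure h2 s)
    have hcinj : Function.Injective c := by
      intro s1 s2 h
      rw [← (hcspec s1).1, ← (hcspec s2).1, h]
    have hmonc : monOf c = α := by
      ext j
      by_cases hαj : α j = 0
      · rw [hαj, monOf_apply, Finset.card_eq_zero, Finset.filter_eq_empty_iff]
        intro s _
        intro hcs
        rw [← hcs] at hαj
        rw [(hcspec s).2.1] at hαj
        exact one_ne_zero hαj
      · have hj : j = c (π j) := (hcspec (π j)).2.2 j rfl hαj
        have h1' : monOf c j = 1 := by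
          rw [monOf_apply, Finset.card_eq_one]
          refine ⟨π j, ?_⟩
          ext s
          simp only [Finset.mem_filter, Finset.mem_univ, true_and, Finset.mem_singleton]
          constructor
          · intro hcs
            rw [← hcs, (hcspec s).1]
          · intro hs
            rw [hs, ← hj]
        have h2' : α j = 1 := by
          rw [hj, (hcspec (π j)).2.1]
        rw [h1', h2']
    have hsingle : (univ.filter fun i : Fin t → Fin n => monOf i = α).filter
        (fun i => ∀ s, π (i s) = s) = {c} := by
      ext i
      simp only [Finset.mem_filter, Finset.mem_univ, true_and, Finset.mem_singleton]
      constructor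
      · rintro ⟨hmon, hid⟩
        funext s
        have hfib : monOf i (i s) ≠ 0 := by
          rw [monOf_apply]
          have : s ∈ univ.filter fun s' => i s' = i s := by simp
          have := Finset.card_pos.2 ⟨s, this⟩
          omega
        have hαis : α (i s) ≠ 0 := by rw [← hmon]; exact hfib
        exact (hcspec s).2.2 (i s) (hid s) hαis
      · rintro rfl
        exact ⟨hmonc, fun s => (hcspec s).1⟩
    have : ∑ i ∈ univ.filter (fun i : Fin t → Fin n => monOf i = α), T i
        = ∑ i ∈ (univ.filter (fun i : Fin t → Fin n => monOf i = α)).filter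
            (fun i => ∀ s, π (i s) = s), coeff α q := by
      rw [Finset.sum_filter (fun i : Fin t → Fin n => ∀ s, π (i s) = s)
        (fun _ => coeff α q)]
      refine Finset.sum_congr rfl fun i hi => ?_
      have hm := (Finset.mem_filter.1 hi).2
      show (if (∀ s, π (i s) = s) then coeff (monOf i) q else 0) = _
      by_cases hid : ∀ s, π (i s) = s
      · rw [if_pos hid, if_pos hid, hm]
      · rw [if_neg hid, if_neg hid]
    rw [this, hsingle, Finset.sum_singleton]
  · have hc0 : coeff α q = 0 := notMem_support_iff.1 hα
    rw [hc0]
    refine Finset.sum_eq_zero fun i hi => ?_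
    show (if (∀ s, π (i s) = s) then coeff (monOf i) q else 0) = 0
    by_cases hid : ∀ s, π (i s) = s
    · rw [if_pos hid, (Finset.mem_filter.1 hi).2, hc0]
    · rw [if_neg hid]

lemma even_add_iff_eq {a b : ℕ} (ha : a ≤ 1) (hb : b ≤ 1) : Even (a + b) ↔ a = b := by
  rw [Nat.even_iff]
  omega

lemma tEval_abs_le' {n t : ℕ} (T : (Fin t → Fin n) → ℝ) (x : Fin n → ℝ)
    (hx : ∀ j, |x j| ≤ 1) : |tEval T x| ≤ cbNormT T :=
  tEval_abs_le T x hx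

lemma coeff_abs_le {n t : ℕ} {q : MvPolynomial (Fin n) ℝ} {T : (Fin t → Fin n) → ℝ}
    (hrepT : ∀ x : Fin n → ℝ, tEval T x = eval x q)
    (hml : ∀ β ∈ q.support, ∀ j, β j ≤ 1) {α : Fin n →₀ ℕ} (hα1 : ∀ j, α j ≤ 1) :
    |coeff α q| ≤ cbNormT T := by
  classical
  have key : (∑ ε : Fin n → Bool, (∏ j, sgn (ε j) ^ (α j)) *
      eval (fun j => sgn (ε j)) q) = (2:ℝ)^n * coeff α q := by
    have hev : ∀ ε : Fin n → Bool, eval (fun j => sgn (ε j)) q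
        = ∑ β ∈ q.support, coeff β q * ∏ j, sgn (ε j) ^ (β j) :=
      fun ε => eval_eq' (fun j => sgn (ε j)) q
    calc ∑ ε : Fin n → Bool, (∏ j, sgn (ε j) ^ (α j)) * eval (fun j => sgn (ε j)) q
        = ∑ ε : Fin n → Bool, ∑ β ∈ q.support,
            coeff β q * ∏ j, sgn (ε j) ^ (α j + β j) := by
          refine Finset.sum_congr rfl fun ε _ => ?_
          rw [hev ε, Finset.mul_sum]
          refine Finset.sum_congr rfl fun β _ => ?_
          rw [← mul_assoc, mul_comm (∏ j, sgn (ε j) ^ (α j)) (coeff β q), mul_assoc,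
            ← Finset.prod_mul_distrib]
          congr 1
          refine Finset.prod_congr rfl fun j _ => ?_
          rw [pow_add]
      _ = ∑ β ∈ q.support, coeff β q *
            ∑ ε : Fin n → Bool, ∏ j, sgn (ε j) ^ (α j + β j) := by
          rw [Finset.sum_comm]
          exact Finset.sum_congr rfl fun β _ => by rw [Finset.mul_sum]
      _ = ∑ β ∈ q.support, (if β = α then coeff β q * (2:ℝ)^n else 0) := by
          refine Finset.sum_congr rfl fun β hβ => ?_
          rw [signSum (fun j => α j + β j), Fintype.card_fin]
          by_cases hb : β = α
          · rw [if_pos hb, if_pos]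
            intro j
            exact (even_add_iff_eq (hα1 j) (hml β hβ j)).2 (by rw [hb])
          · rw [if_neg hb, if_neg, mul_zero]
            intro hc
            refine hb (Finsupp.ext fun j => ?_)
            exact ((even_add_iff_eq (hα1 j) (hml β hβ j)).1 (hc j)).symm
      _ = (2:ℝ)^n * coeff α q := by
          rw [Finset.sum_ite_eq' q.support α (fun β => coeff β q * (2:ℝ)^n)]
          by_cases hα : α ∈ q.support
          · rw [if_pos hα, mul_comm]
          · rw [if_neg hα, notMem_support_iff.1 hα, mul_zero]
  have h2n : (0:ℝ) < (2:ℝ)^n := by positivity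
  have habs : |coeff α q| = ((2:ℝ)^n)⁻¹ * |∑ ε : Fin n → Bool, (∏ j, sgn (ε j) ^ (α j)) *
      eval (fun j => sgn (ε j)) q| := by
    rw [key, abs_mul, abs_of_pos h2n]
    field_simp
  rw [habs]
  have hbound : |∑ ε : Fin n → Bool, (∏ j, sgn (ε j) ^ (α j)) *
      eval (fun j => sgn (ε j)) q| ≤ (2:ℝ)^n * cbNormT T := by
    calc |∑ ε : Fin n → Bool, (∏ j, sgn (ε j) ^ (α j)) * eval (fun j => sgn (ε j)) q|
        ≤ ∑ ε : Fin n → Bool, |(∏ j, sgn (ε j) ^ (α j)) * eval (fun j => sgn (ε j)) q| :=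
          Finset.abs_sum_le_sum_abs _ _
      _ ≤ ∑ ε : Fin n → Bool, cbNormT T := by
          refine Finset.sum_le_sum fun ε _ => ?_
          rw [abs_mul]
          have hpr : |∏ j, sgn (ε j) ^ (α j)| ≤ 1 := by
            rw [Finset.abs_prod]
            refine Finset.prod_le_one (fun j _ => abs_nonneg _) fun j _ => ?_
            rw [abs_pow, abs_sgn, one_pow]
          have heval : |eval (fun j => sgn (ε j)) q| ≤ cbNormT T := by
            rw [← hrepT (fun j => sgn (ε j))]
            exact tEval_abs_le' T _ fun j => le_of_eq (abs_sgn (ε j))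
          calc |∏ j, sgn (ε j) ^ (α j)| * |eval (fun j => sgn (ε j)) q|
              ≤ 1 * cbNormT T :=
              mul_le_mul hpr heval (abs_nonneg _) zero_le_one
            _ = cbNormT T := one_mul _
      _ = (2:ℝ)^n * cbNormT T := by
          rw [Finset.sum_const, card_univ, Fintype.card_fun, Fintype.card_bool,
            Fintype.card_fin, nsmul_eq_mul]
          push_cast
          ring
  calc ((2:ℝ)^n)⁻¹ * |∑ ε : Fin n → Bool, (∏ j, sgn (ε j) ^ (α j)) *
      eval (fun j => sgn (ε j)) q| ≤ ((2:ℝ)^n)⁻¹ * ((2:ℝ)^n * cbNormT T) :=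
        mul_le_mul_of_nonneg_left hbound (by positivity)
    _ = cbNormT T := by field_simp

lemma pInner_abs_le {n : ℕ} (p q : MvPolynomial (Fin n) ℝ) (C : ℝ)
    (h : ∀ α ∈ p.support, |coeff α q| ≤ C) :
    |pInner p q| ≤ (∑ α ∈ p.support, |coeff α p|) * C := by
  calc |pInner p q| ≤ ∑ α ∈ p.support, |coeff α p * coeff α q| :=
        Finset.abs_sum_le_sum_abs _ _
    _ ≤ ∑ α ∈ p.support, |coeff α p| * C := by
        refine Finset.sum_le_sum fun α hα => ?_
        rw [abs_mul]
        exact mul_le_mul_of_nonneg_left (h α hα) (abs_nonneg _)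
    _ = (∑ α ∈ p.support, |coeff α p|) * C := by rw [Finset.sum_mul]

lemma memV_polyOfT_proj {n t : ℕ} (π : Fin n → Fin t) (T : (Fin t → Fin n) → ℝ) :
    memV π (polyOfT (projT π T)) := by
  classical
  intro α hα
  rw [mem_support_iff, coeff_polyOfT] at hα
  obtain ⟨i, hi, hne⟩ := Finset.exists_ne_zero_of_sum_ne_zero hα
  have hgood : goodIdx π i := by
    by_contra hbad
    exact hne (by rw [projT, if_neg hbad])
  have hmon : monOf i = α := (Finset.mem_filter.1 hi).2
  constructor
  · intro j
    rw [← hmon]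
    exact monOf_le_one_of_inj (goodIdx_inj hgood) j
  · intro s
    rw [← hmon, block_sum_monOf π i s]
    exact hgood s

lemma Tp_eq_zero_of_not_good {n t : ℕ} (π : Fin n → Fin t) (p : MvPolynomial (Fin n) ℝ)
    (hp : memV π p) (Tp : (Fin t → Fin n) → ℝ)
    (hsym : ∀ σ : Equiv.Perm (Fin t), permT Tp σ = Tp)
    (hrep : ∀ x : Fin n → ℝ, tEval Tp x = eval x p) :
    ∀ i : Fin t → Fin n, ¬ goodIdx π i → Tp i = 0 := by
  classical
  have hpeq : polyOfT Tp = p := polyOfT_eq_of_rep hrep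
  have hcoeffp : ∀ i : Fin t → Fin n, coeff (monOf i) p
      = ((univ.filter fun i' : Fin t → Fin n => monOf i' = monOf i).card : ℝ) * Tp i := by
    intro i
    rw [← hpeq, coeff_polyOfT]
    rw [Finset.sum_congr rfl (fun i' hi' => ?_), Finset.sum_const, nsmul_eq_mul]
    obtain ⟨σ, hσ⟩ := exists_comp_perm_of_monOf (Finset.mem_filter.1 hi').2.symm
    rw [hσ]
    exact Tp_perm_const hsym i σ
  intro i hbad
  have hbad_coeff : coeff (monOf i) p = 0 := by
    by_contra hc
    exact hbad (goodIdx_of_monOf (hp (monOf i) (mem_support_iff.2 hc)).2 rfl)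
  have h0 := (hcoeffp i).symm.trans hbad_coeff
  have hcard : ((univ.filter fun i' : Fin t → Fin n => monOf i' = monOf i).card : ℝ) ≠ 0 := by
    have hm : i ∈ univ.filter fun i' : Fin t → Fin n => monOf i' = monOf i := by simp
    have hpos := Finset.card_pos.2 ⟨i, hm⟩
    positivity
  exact (mul_eq_zero.1 h0).resolve_left hcard

/-- For a partition of `[n]` into `t` parts and `p ∈ V_P` with unique symmetric
representing tensor `T_p`, the dual cb-norm with respect to `V_P` satisfies
`‖p‖_{cb,*} = t! · ‖T_p‖_{cb,*}`. -/
theorem dual_cb_norm_eq_factorial_mul (n t : ℕ) (π : Fin n → Fin t)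
    (hπ : Function.Surjective π) (p : MvPolynomial (Fin n) ℝ) (hp : memV π p)
    (Tp : (Fin t → Fin n) → ℝ)
    (hsym : ∀ σ : Equiv.Perm (Fin t), permT Tp σ = Tp)
    (hrep : ∀ x : Fin n → ℝ, tEval Tp x = eval x p) :
    sSup {c : ℝ | ∃ q : MvPolynomial (Fin n) ℝ,
        memV π q ∧ polyCb n t q ≤ 1 ∧ c = pInner p q} =
    (t.factorial : ℝ) *
      sSup {c : ℝ | ∃ T : (Fin t → Fin n) → ℝ,
        cbNormT T ≤ 1 ∧ c = ∑ i : Fin t → Fin n, Tp i * T i} := by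
  classical
  set L : Set ℝ := {c : ℝ | ∃ q : MvPolynomial (Fin n) ℝ,
      memV π q ∧ polyCb n t q ≤ 1 ∧ c = pInner p q} with hLdef
  set R : Set ℝ := {c : ℝ | ∃ T : (Fin t → Fin n) → ℝ,
      cbNormT T ≤ 1 ∧ c = ∑ i : Fin t → Fin n, Tp i * T i} with hRdef
  have hfacpos : (0:ℝ) < (t.factorial : ℝ) := by
    exact_mod_cast Nat.factorial_pos t
  have hTpbad := Tp_eq_zero_of_not_good π p hp Tp hsym hrep
  have hsum_proj : ∀ T : (Fin t → Fin n) → ℝ,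
      (∑ i : Fin t → Fin n, Tp i * T i) = ∑ i : Fin t → Fin n, Tp i * projT π T i := by
    intro T
    refine Finset.sum_congr rfl fun i _ => ?_
    by_cases hg : goodIdx π i
    · rw [projT, if_pos hg]
    · rw [hTpbad i hg, zero_mul, zero_mul]
  have hproj_inner : ∀ T : (Fin t → Fin n) → ℝ,
      pInner p (polyOfT (projT π T)) = (t.factorial : ℝ) * ∑ i : Fin t → Fin n, Tp i * T i := by
    intro T
    rw [main_identity π p hp Tp hsym hrep (polyOfT (projT π T)) (projT π T)
      (fun x => tEval_polyOfT _ x), ← hsum_proj T]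
  have h0R : (0:ℝ) ∈ R := by
    have hcb : cbNormT (fun _ : Fin t → Fin n => (0:ℝ)) ≤ 1 := by
      refine le_trans (cbNormT_le_sum _) ?_
      simp
    exact ⟨fun _ => 0, hcb, by simp⟩
  have hRbdd : BddAbove R := by
    refine ⟨(∑ α ∈ p.support, |coeff α p|) / (t.factorial : ℝ), ?_⟩
    rintro c ⟨T, hTcb, rfl⟩
    rw [le_div_iff₀ hfacpos]
    have hq' := hproj_inner T
    have hcoeffb : ∀ α ∈ p.support, |coeff α (polyOfT (projT π T))| ≤ 1 := by
      intro α hα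
      have h1 := coeff_abs_le (q := polyOfT (projT π T)) (T := projT π T)
        (fun x => tEval_polyOfT _ x) (fun β hβ => (memV_polyOfT_proj π T β hβ).1)
        (hp α hα).1
      exact le_trans h1 (le_trans (cbNormT_proj_le π T) hTcb)
    have h2 := pInner_abs_le p (polyOfT (projT π T)) 1 hcoeffb
    rw [mul_one] at h2
    calc (∑ i : Fin t → Fin n, Tp i * T i) * (t.factorial : ℝ)
        = pInner p (polyOfT (projT π T)) := by rw [hq']; ring
      _ ≤ |pInner p (polyOfT (projT π T))| := le_abs_self _
      _ ≤ ∑ α ∈ p.support, |coeff α p| := h2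
  have hSR0 : 0 ≤ sSup R := le_csSup hRbdd h0R
  have h0L : (0:ℝ) ∈ L := by
    refine ⟨0, fun α hα => absurd hα (by simp), ?_, by simp [pInner]⟩
    have hrep0 : ∀ x : Fin n → ℝ,
        tEval (fun _ : Fin t → Fin n => (0:ℝ)) x = eval x (0 : MvPolynomial (Fin n) ℝ) := by
      intro x
      simp [tEval]
    refine le_trans (polyCb_le_of_rep hrep0) ?_
    refine le_trans (cbNormT_le_sum _) ?_
    simp
  have hLne : L.Nonempty := ⟨0, h0L⟩
  have hLbdd : BddAbove L := by
    refine ⟨(∑ α ∈ p.support, |coeff α p|) * 2, ?_⟩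
    rintro c ⟨q, hq, hqcb, rfl⟩
    obtain ⟨T0, hT0⟩ := exists_rep_of_memV hq
    have hne : {c : ℝ | ∃ T : (Fin t → Fin n) → ℝ,
        (∀ x : Fin n → ℝ, tEval T x = eval x q) ∧ c = cbNormT T}.Nonempty :=
      ⟨_, T0, hT0, rfl⟩
    have hlt : polyCb n t q < 2 := lt_of_le_of_lt hqcb one_lt_two
    unfold polyCb at hlt
    obtain ⟨c', ⟨T, hTrep, rfl⟩, hc'⟩ := (csInf_lt_iff (repSet_bddBelow n t q) hne).1 hlt
    have hcoeffb : ∀ α ∈ p.support, |coeff α q| ≤ 2 := fun α hα =>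
      le_trans (coeff_abs_le hTrep (fun β hβ j => (hq β hβ).1 j) (hp α hα).1) (le_of_lt hc')
    exact le_trans (le_abs_self _) (pInner_abs_le p q 2 hcoeffb)
  have hRL : ∀ c ∈ R, (t.factorial : ℝ) * c ≤ sSup L := by
    rintro c ⟨T, hTcb, rfl⟩
    have hmem : pInner p (polyOfT (projT π T)) ∈ L := by
      refine ⟨polyOfT (projT π T), memV_polyOfT_proj π T, ?_, rfl⟩
      exact le_trans (polyCb_le_of_rep (fun x => tEval_polyOfT _ x))
        (le_trans (cbNormT_proj_le π T) hTcb)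
    have hgoal := le_csSup hLbdd hmem
    rwa [hproj_inner T] at hgoal
  have hLR : ∀ c ∈ L, c ≤ (t.factorial : ℝ) * sSup R := by
    rintro c ⟨q, hq, hqcb, rfl⟩
    obtain ⟨T0, hT0⟩ := exists_rep_of_memV hq
    have hne : {c : ℝ | ∃ T : (Fin t → Fin n) → ℝ,
        (∀ x : Fin n → ℝ, tEval T x = eval x q) ∧ c = cbNormT T}.Nonempty :=
      ⟨_, T0, hT0, rfl⟩
    refine le_of_forall_pos_le_add fun δ hδ => ?_
    set K := (t.factorial : ℝ) * sSup R with hK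
    have hK0 : 0 ≤ K := mul_nonneg (le_of_lt hfacpos) hSR0
    set ε := δ / (K + 1) with hε
    have hε0 : 0 < ε := div_pos hδ (by linarith)
    have hlt : polyCb n t q < 1 + ε := lt_of_le_of_lt hqcb (by linarith)
    unfold polyCb at hlt
    obtain ⟨c', ⟨T, hTrep, rfl⟩, hc'⟩ := (csInf_lt_iff (repSet_bddBelow n t q) hne).1 hlt
    have h1ε : (0:ℝ) < 1 + ε := by linarith
    set T' : (Fin t → Fin n) → ℝ := fun i => (1 + ε)⁻¹ * T i with hT'
    have hT'cb : cbNormT T' ≤ 1 := by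
      refine le_trans (cb_scale_le T (1+ε)⁻¹ (by positivity)) ?_
      calc (1+ε)⁻¹ * cbNormT T ≤ (1+ε)⁻¹ * (1+ε) :=
            mul_le_mul_of_nonneg_left (le_of_lt hc') (by positivity)
        _ = 1 := inv_mul_cancel₀ (ne_of_gt h1ε)
    have hmemR : (∑ i : Fin t → Fin n, Tp i * T' i) ∈ R := ⟨T', hT'cb, rfl⟩
    have hle := le_csSup hRbdd hmemR
    have hid := main_identity π p hp Tp hsym hrep q T hTrep
    have hscale : (∑ i : Fin t → Fin n, Tp i * T i)
        = (1+ε) * ∑ i : Fin t → Fin n, Tp i * T' i := by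
      rw [Finset.mul_sum]
      refine Finset.sum_congr rfl fun i _ => ?_
      show Tp i * T i = (1+ε) * (Tp i * ((1+ε)⁻¹ * T i))
      field_simp
    calc pInner p q = (t.factorial : ℝ) * ((1+ε) * ∑ i : Fin t → Fin n, Tp i * T' i) := by
          rw [hid, hscale]
      _ ≤ (t.factorial : ℝ) * ((1+ε) * sSup R) :=
          mul_le_mul_of_nonneg_left
            (mul_le_mul_of_nonneg_left hle (le_of_lt h1ε)) (le_of_lt hfacpos)
      _ = K + ε * K := by rw [hK]; ring
      _ ≤ K + δ := by
          refine add_le_add le_rfl ?_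
          rw [hε, div_mul_eq_mul_div, div_le_iff₀ (by linarith : (0:ℝ) < K + 1)]
          nlinarith
  refine le_antisymm (csSup_le hLne hLR) ?_
  have hSRle : sSup R ≤ sSup L / (t.factorial : ℝ) := by
    refine csSup_le ⟨0, h0R⟩ fun c hc => ?_
    rw [le_div_iff₀ hfacpos]
    have h3 := hRL c hc
    linarith
  calc (t.factorial : ℝ) * sSup R ≤ (t.factorial : ℝ) * (sSup L / (t.factorial : ℝ)) :=
        mul_le_mul_of_nonneg_left hSRle (le_of_lt hfacpos)
    _ = sSup L := by field_simp
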